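/- For a bipartite multigraph where each of m1 'row' vertices on each side has degree exactly m2, the edge set decomposes into m2 perfect matchings; consequently, in the Rubik table setting, the first phase of row shuffles can place in each column exactly one tile whose goal lies in each row. -/

import Mathlib

/-- A cell of an `m₁ × m₂` grid. -/
abbrev Cell (m₁ m₂ : ℕ) := Fin m₁ × Fin m₂

/-- The row-major configuration: label `i * m₂ + j` occupies cell `(i, j)`. -/
def rowMajor (m₁ m₂ : ℕ) : Fin (m₁ * m₂) → Cell m₁ m₂ :=
  fun l => (@finProdFinEquiv m₁ m₂).symm l

open Finset

lemma exists_coloring {n N : ℕ} (ends : Fin N → Fin n × Fin n) :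
    ∀ (k : ℕ) (E : Finset (Fin N)),
    (∀ v, (E.filter fun e => (ends e).1 = v).card = k) →
    (∀ v, (E.filter fun e => (ends e).2 = v).card = k) →
    ∃ c : Fin N → ℕ, (∀ e ∈ E, c e < k) ∧
      ∀ j < k, ∀ v, (∃! e, e ∈ E ∧ c e = j ∧ (ends e).1 = v) ∧
                    (∃! e, e ∈ E ∧ c e = j ∧ (ends e).2 = v) := by
  intro k
  induction k with
  | zero =>
    intro E hL hR
    refine ⟨fun _ => 0, fun e he => ?_, fun j hj => absurd hj (by omega)⟩
    have h0 := hL (ends e).1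
    have : e ∈ E.filter fun e' => (ends e').1 = (ends e).1 := mem_filter.mpr ⟨he, rfl⟩
    rw [Finset.card_eq_zero.mp h0] at this
    exact absurd this (notMem_empty e)
  | succ k ih =>
    intro E hL hR
    classical
    set t : Fin n → Finset (Fin n) :=
      fun v => (E.filter fun e => (ends e).1 = v).image (fun e => (ends e).2) with ht
    -- Hall condition
    have hall : ∀ s : Finset (Fin n), s.card ≤ (s.biUnion t).card := by
      intro s
      set Ns := s.biUnion t with hNs
      have hF : (E.filter fun e => (ends e).1 ∈ s).card = (k+1) * s.card := by
        rw [Finset.card_eq_sum_card_fiberwise (f := fun e => (ends e).1) (t := s)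
          (s := E.filter fun e => (ends e).1 ∈ s) (fun e he => (mem_filter.mp (Finset.mem_coe.mp he)).2)]
        rw [Finset.sum_congr rfl (fun v hv => ?_), Finset.sum_const, smul_eq_mul, mul_comm]
        · rw [Finset.filter_filter]
          rw [← hL v]
          congr 1
          apply Finset.filter_congr
          intro e he
          constructor
          · rintro ⟨_, h⟩; exact h
          · intro h; exact ⟨by simpa [h] using hv, h⟩
      have hG : (E.filter fun e => (ends e).2 ∈ Ns).card = (k+1) * Ns.card := by
        rw [Finset.card_eq_sum_card_fiberwise (f := fun e => (ends e).2) (t := Ns)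
          (s := E.filter fun e => (ends e).2 ∈ Ns) (fun e he => (mem_filter.mp (Finset.mem_coe.mp he)).2)]
        rw [Finset.sum_congr rfl (fun w hw => ?_), Finset.sum_const, smul_eq_mul, mul_comm]
        · rw [Finset.filter_filter]
          rw [← hR w]
          congr 1
          apply Finset.filter_congr
          intro e he
          constructor
          · rintro ⟨_, h⟩; exact h
          · intro h; exact ⟨by simpa [h] using hw, h⟩
      have hsub : (E.filter fun e => (ends e).1 ∈ s) ⊆ (E.filter fun e => (ends e).2 ∈ Ns) := by
        intro e he
        obtain ⟨heE, hes⟩ := mem_filter.mp he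
        refine mem_filter.mpr ⟨heE, ?_⟩
        refine Finset.mem_biUnion.mpr ⟨(ends e).1, hes, ?_⟩
        exact Finset.mem_image.mpr ⟨e, mem_filter.mpr ⟨heE, rfl⟩, rfl⟩
      have := Finset.card_le_card hsub
      rw [hF, hG] at this
      exact Nat.le_of_mul_le_mul_left this (by omega)
    obtain ⟨g, hginj, hgmem⟩ := (Finset.all_card_le_biUnion_card_iff_exists_injective t).mp hall
    have hgbij : Function.Bijective g := Finite.injective_iff_bijective.mp hginj
    have hch : ∀ v, ∃ e, (e ∈ E ∧ (ends e).1 = v) ∧ (ends e).2 = g v := by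
      intro v
      obtain ⟨e, he, hee⟩ := Finset.mem_image.mp (hgmem v)
      exact ⟨e, mem_filter.mp he, hee⟩
    choose σ hσ using hch
    have hσE : ∀ v, σ v ∈ E := fun v => (hσ v).1.1
    have hσ1 : ∀ v, (ends (σ v)).1 = v := fun v => (hσ v).1.2
    have hσ2 : ∀ v, (ends (σ v)).2 = g v := fun v => (hσ v).2
    set M : Finset (Fin N) := Finset.image σ Finset.univ with hM
    have hmemM : ∀ e, e ∈ M ↔ ∃ v, σ v = e := by
      intro e; simp [hM]
    -- degrees of E \ M
    have hL' : ∀ v, ((E \ M).filter fun e => (ends e).1 = v).card = k := by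
      intro v
      have heq : ((E \ M).filter fun e => (ends e).1 = v)
          = (E.filter fun e => (ends e).1 = v).erase (σ v) := by
        ext e
        simp only [Finset.mem_filter, Finset.mem_sdiff, Finset.mem_erase]
        constructor
        · rintro ⟨⟨heE, heM⟩, h1⟩
          refine ⟨?_, heE, h1⟩
          intro hev
          exact heM ((hmemM e).mpr ⟨v, hev.symm⟩)
        · rintro ⟨hne, heE, h1⟩
          refine ⟨⟨heE, ?_⟩, h1⟩
          intro heM
          obtain ⟨v', hv'⟩ := (hmemM e).mp heM
          apply hne
          have : v' = v := by rw [← h1, ← hv', hσ1]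
          rw [← hv', this]
        
      rw [heq, Finset.card_erase_of_mem (mem_filter.mpr ⟨hσE v, hσ1 v⟩), hL v]; omega
    have hR' : ∀ w, ((E \ M).filter fun e => (ends e).2 = w).card = k := by
      intro w
      obtain ⟨v, hv⟩ := hgbij.2 w
      have heq : ((E \ M).filter fun e => (ends e).2 = w)
          = (E.filter fun e => (ends e).2 = w).erase (σ v) := by
        ext e
        simp only [Finset.mem_filter, Finset.mem_sdiff, Finset.mem_erase]
        constructor
        · rintro ⟨⟨heE, heM⟩, h2⟩
          refine ⟨?_, heE, h2⟩
          intro hev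
          exact heM ((hmemM e).mpr ⟨v, hev.symm⟩)
        · rintro ⟨hne, heE, h2⟩
          refine ⟨⟨heE, ?_⟩, h2⟩
          intro heM
          obtain ⟨v', hv'⟩ := (hmemM e).mp heM
          apply hne
          have : g v' = g v := by rw [hv, ← h2, ← hv', hσ2]
          rw [← hv', hginj this]
      rw [heq, Finset.card_erase_of_mem
        (mem_filter.mpr ⟨hσE v, by rw [hσ2, hv]⟩), hR w]
      omega
    obtain ⟨c', hc'lt, hc'⟩ := ih (E \ M) hL' hR'
    refine ⟨fun e => if e ∈ M then k else c' e, ?_, ?_⟩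
    · intro e he
      by_cases heM : e ∈ M
      · simp [heM]
      · simp only [heM, if_neg, if_false]
        have := hc'lt e (Finset.mem_sdiff.mpr ⟨he, heM⟩)
        omega
    · intro j hj v
      have memk : ∀ e, e ∈ E → (if e ∈ M then k else c' e) = k → e ∈ M := by
        intro e heE hce
        by_contra heM
        rw [if_neg heM] at hce
        have := hc'lt e (Finset.mem_sdiff.mpr ⟨heE, heM⟩)
        omega
      rcases Nat.lt_succ_iff_lt_or_eq.mp hj with hjk | rfl
      · obtain ⟨⟨e1, ⟨he1E, he1c, he1v⟩, hu1⟩, ⟨e2, ⟨he2E, he2c, he2v⟩, hu2⟩⟩ := hc' j hjk v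
        have notM : ∀ e, e ∈ E \ M → e ∉ M := fun e he => (Finset.mem_sdiff.mp he).2
        constructor
        · refine ⟨e1, ⟨(Finset.mem_sdiff.mp he1E).1, by simp only [if_neg (notM _ he1E)]; exact he1c, he1v⟩, ?_⟩
          rintro e ⟨heE, hec, hev⟩
          have heM : e ∉ M := by
            intro heM; simp only [if_pos heM] at hec; omega
          simp only [if_neg heM] at hec
          exact hu1 e ⟨Finset.mem_sdiff.mpr ⟨heE, heM⟩, hec, hev⟩
        · refine ⟨e2, ⟨(Finset.mem_sdiff.mp he2E).1, by simp only [if_neg (notM _ he2E)]; exact he2c, he2v⟩, ?_⟩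
          rintro e ⟨heE, hec, hev⟩
          have heM : e ∉ M := by
            intro heM; simp only [if_pos heM] at hec; omega
          simp only [if_neg heM] at hec
          exact hu2 e ⟨Finset.mem_sdiff.mpr ⟨heE, heM⟩, hec, hev⟩
      · constructor
        · refine ⟨σ v, ⟨hσE v, by simp only [if_pos ((hmemM _).mpr ⟨v, rfl⟩)], hσ1 v⟩, ?_⟩
          rintro e ⟨heE, hec, hev⟩
          obtain ⟨v', hv'⟩ := (hmemM e).mp (memk e heE hec)
          rw [← hv'] at hev ⊢
          rw [hσ1] at hev
          rw [hev]
        · obtain ⟨w, hw⟩ := hgbij.2 v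
          refine ⟨σ w, ⟨hσE w, by simp only [if_pos ((hmemM _).mpr ⟨w, rfl⟩)], by rw [hσ2, hw]⟩, ?_⟩
          rintro e ⟨heE, hec, hev⟩
          obtain ⟨v', hv'⟩ := (hmemM e).mp (memk e heE hec)
          rw [← hv'] at hev ⊢
          rw [hσ2] at hev
          rw [hginj (hev.trans hw.symm)]

lemma card_left_fiber {m₁ m₂ : ℕ} (h : Fin (m₁ * m₂) → Cell m₁ m₂) (hb : Function.Bijective h)
    (v : Fin m₁) : (Finset.univ.filter fun e => (h e).1 = v).card = m₂ := by
  classical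
  have e1 : (Finset.univ.filter fun e => (h e).1 = v).card
      = (Finset.univ.filter fun c : Cell m₁ m₂ => c.1 = v).card := by
    apply Finset.card_bij (fun e _ => h e)
    · intro e he
      exact Finset.mem_filter.mpr ⟨Finset.mem_univ _, (Finset.mem_filter.mp he).2⟩
    · intro a _ b _ hab
      exact hb.1 hab
    · intro c hc
      obtain ⟨e, he⟩ := hb.2 c
      exact ⟨e, Finset.mem_filter.mpr ⟨Finset.mem_univ _,
        by rw [he]; exact (Finset.mem_filter.mp hc).2⟩, he⟩
  rw [e1]
  have e2 : (Finset.univ.filter fun c : Cell m₁ m₂ => c.1 = v) = {v} ×ˢ Finset.univ := by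
    ext c
    simp only [Finset.mem_filter, Finset.mem_univ, true_and, Finset.mem_product,
      Finset.mem_singleton, and_true]
  rw [e2]
  simp

/-- A bipartite multigraph on `m₁ + m₁` vertices (one edge per tile,
connecting its current row to its goal row) in which every vertex has degree exactly
`m₂` decomposes into `m₂` perfect matchings; consequently, row shuffles alone can reach a
configuration in which each column contains exactly one tile destined for each row. -/
theorem bipartite_decomposition_and_rubik_intermediate
    (m₁ m₂ : ℕ) (ends : Fin (m₁ * m₂) → Fin m₁ × Fin m₁)
    (hdegL : ∀ v : Fin m₁, (Finset.univ.filter fun e => (ends e).1 = v).card = m₂)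
    (hdegR : ∀ v : Fin m₁, (Finset.univ.filter fun e => (ends e).2 = v).card = m₂) :
    (∃ color : Fin (m₁ * m₂) → Fin m₂,
      ∀ (j : Fin m₂) (v : Fin m₁),
        (∃! e, color e = j ∧ (ends e).1 = v) ∧ (∃! e, color e = j ∧ (ends e).2 = v))
    ∧ (∀ f : Fin (m₁ * m₂) → Cell m₁ m₂, Function.Bijective f →
        ∃ f' : Fin (m₁ * m₂) → Cell m₁ m₂, Function.Bijective f' ∧
          (∀ l, (f' l).1 = (f l).1) ∧
          ∀ (col : Fin m₂) (r : Fin m₁),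
            ∃! l, (f' l).2 = col ∧ (rowMajor m₁ m₂ l).1 = r) := by
  classical
  constructor
  · obtain ⟨c, hclt, hc⟩ := exists_coloring ends m₂ Finset.univ hdegL hdegR
    refine ⟨fun e => ⟨c e, hclt e (Finset.mem_univ e)⟩, fun j v => ?_⟩
    obtain ⟨⟨e1, ⟨_, he1c, he1v⟩, hu1⟩, ⟨e2, ⟨_, he2c, he2v⟩, hu2⟩⟩ := hc j.val j.isLt v
    constructor
    · refine ⟨e1, ⟨Fin.ext he1c, he1v⟩, ?_⟩
      rintro e ⟨hec, hev⟩
      exact hu1 e ⟨Finset.mem_univ e, congrArg Fin.val hec, hev⟩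
    · refine ⟨e2, ⟨Fin.ext he2c, he2v⟩, ?_⟩
      rintro e ⟨hec, hev⟩
      exact hu2 e ⟨Finset.mem_univ e, congrArg Fin.val hec, hev⟩
  · intro f hf
    have hrm : Function.Bijective (rowMajor m₁ m₂) := (@finProdFinEquiv m₁ m₂).symm.bijective
    set ends' : Fin (m₁ * m₂) → Fin m₁ × Fin m₁ :=
      fun e => ((f e).1, (rowMajor m₁ m₂ e).1) with hE
    obtain ⟨c, hclt, hc⟩ := exists_coloring ends' m₂ Finset.univ
      (fun v => card_left_fiber f hf v) (fun v => card_left_fiber (rowMajor m₁ m₂) hrm v)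
    refine ⟨fun l => ((f l).1, ⟨c l, hclt l (Finset.mem_univ l)⟩), ?_, fun l => rfl, ?_⟩
    · have hinj : Function.Injective (fun l : Fin (m₁ * m₂) =>
          (((f l).1, ⟨c l, hclt l (Finset.mem_univ l)⟩) : Cell m₁ m₂)) := by
        intro a b hab
        simp only [Prod.mk.injEq] at hab
        obtain ⟨h1, h2f⟩ := hab
        have h2 : c a = c b := congrArg Fin.val h2f
        obtain ⟨⟨e1, _, hu1⟩, _⟩ := hc (c a) (hclt a (Finset.mem_univ a)) ((f a).1)
        have ha := hu1 a ⟨Finset.mem_univ a, rfl, rfl⟩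
        have hb := hu1 b ⟨Finset.mem_univ b, h2.symm, h1.symm⟩
        rw [ha, hb]
      refine (Fintype.bijective_iff_injective_and_card _).mpr ⟨hinj, ?_⟩
      simp
    · intro col r
      obtain ⟨_, ⟨e2, ⟨_, he2c, he2v⟩, hu2⟩⟩ := hc col.val col.isLt r
      refine ⟨e2, ⟨Fin.ext he2c, he2v⟩, ?_⟩
      rintro l ⟨hlc, hlv⟩
      exact hu2 l ⟨Finset.mem_univ l, congrArg Fin.val hlc, hlv⟩
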